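/- Let K ⊆ ℝ² be convex, and for lines L₁,...,Lₙ each having K on one side, define V(p) = Σ dist(p, Lᵢ). If V takes the same value at three affinely independent points of K, then V is constant on K. -/

import Mathlib

open Metric
open scoped InnerProductSpace

noncomputable section

abbrev E2 := EuclideanSpace ℝ (Fin 2)

/-- The line `{q : αᵢ·q + γᵢ = 0}` in ℝ². -/
def line2 (a : E2) (γ : ℝ) : Set E2 := {q : E2 | ⟪a, q⟫_ℝ + γ = 0}

/-- The sum of the distances from `p` to the lines `Lᵢ`. -/
def sumDist {n : ℕ} (a : Fin n → E2) (γ : Fin n → ℝ) (p : E2) : ℝ :=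
  ∑ i, infDist p (line2 (a i) (γ i))

lemma infDist_line2 (a : E2) (γ : ℝ) (ha : a ≠ 0) (p : E2) :
    infDist p (line2 a γ) = |⟪a, p⟫_ℝ + γ| / ‖a‖ := by
  have hna : (0:ℝ) < ‖a‖ := norm_pos_iff.mpr ha
  set t : ℝ := (⟪a, p⟫_ℝ + γ) / ‖a‖ ^ 2 with ht
  have hq0 : p - t • a ∈ line2 a γ := by
    simp only [line2, Set.mem_setOf_eq, inner_sub_right, real_inner_smul_right,
      real_inner_self_eq_norm_sq]
    rw [ht, div_mul_cancel₀ _ (pow_ne_zero 2 hna.ne')]; ring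
  have hd : dist p (p - t • a) = |⟪a, p⟫_ℝ + γ| / ‖a‖ := by
    rw [dist_eq_norm]
    have : p - (p - t • a) = t • a := by abel
    rw [this, norm_smul]
    rw [ht]
    rw [Real.norm_eq_abs, abs_div, abs_pow, abs_norm]
    rw [div_mul_eq_mul_div, sq]
    field_simp
  apply le_antisymm
  · calc infDist p (line2 a γ) ≤ dist p (p - t • a) := infDist_le_dist_of_mem hq0
      _ = _ := hd
  · rw [← not_lt]
    intro hlt
    obtain ⟨q, hq, hdq⟩ := (infDist_lt_iff ⟨_, hq0⟩).mp hlt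
    revert hdq
    rw [imp_false, not_lt]
    have hq' : ⟪a, q⟫_ℝ = -γ := by have := hq; simp only [line2, Set.mem_setOf_eq] at this; linarith
    have : |⟪a, p⟫_ℝ + γ| = |⟪a, p - q⟫_ℝ| := by rw [inner_sub_right, hq']; ring_nf
    rw [div_le_iff₀ hna, this]
    calc |⟪a, p - q⟫_ℝ| ≤ ‖a‖ * ‖p - q‖ := abs_real_inner_le_norm a (p - q)
      _ = dist p q * ‖a‖ := by rw [dist_eq_norm]; ring

lemma w_eq_zero (P₁ P₂ P₃ : E2) (hind : AffineIndependent ℝ ![P₁, P₂, P₃])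
    (w : E2) (h1 : ⟪w, P₂ - P₁⟫_ℝ = 0) (h2 : ⟪w, P₃ - P₁⟫_ℝ = 0) : w = 0 := by
  have hli : LinearIndependent ℝ ![P₂ - P₁, P₃ - P₁] := by
    have h := (affineIndependent_iff_linearIndependent_vsub ℝ ![P₁, P₂, P₃] 0).mp hind
    let e : Fin 2 → {x : Fin 3 // x ≠ 0} := ![⟨1, by decide⟩, ⟨2, by decide⟩]
    have hinj : Function.Injective e := by
      intro i j hij
      fin_cases i <;> fin_cases j <;> simp_all [e]
    have := h.comp e hinj
    convert this using 1
    funext j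
    fin_cases j <;> simp [e] <;> rfl
    rfl
  have hspan : Submodule.span ℝ (Set.range ![P₂ - P₁, P₃ - P₁]) = ⊤ := by
    apply LinearIndependent.span_eq_top_of_card_eq_finrank hli
    simp [finrank_euclideanSpace]
  have hall : ∀ x ∈ Submodule.span ℝ (Set.range ![P₂ - P₁, P₃ - P₁]), ⟪w, x⟫_ℝ = 0 := by
    intro x hx
    induction hx using Submodule.span_induction with
    | mem x hx =>
      obtain ⟨i, rfl⟩ := hx
      fin_cases i
      · exact h1
      · exact h2
    | zero => simp
    | add x y _ _ hx hy => rw [inner_add_right, hx, hy]; ring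
    | smul c x _ hx => rw [real_inner_smul_right, hx]; ring
  have hw : ⟪w, w⟫_ℝ = 0 := hall w (by rw [hspan]; trivial)
  exact inner_self_eq_zero.mp hw

/-- If `V(p) = Σ dist(p, Lᵢ)` takes the same value at three affinely independent points
of a convex set `K` having all the lines `Lᵢ` on one side, then `V` is constant on `K`. -/
theorem sum_dist_const_of_three_indep {n : ℕ} (a : Fin n → E2) (γ : Fin n → ℝ)
    (ha : ∀ i, a i ≠ 0) (K : Set E2) (hK : Convex ℝ K)
    (hside : ∀ i, ∀ p ∈ K, 0 ≤ ⟪a i, p⟫_ℝ + γ i)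
    (P₁ P₂ P₃ : E2) (hP₁ : P₁ ∈ K) (hP₂ : P₂ ∈ K) (hP₃ : P₃ ∈ K)
    (hind : AffineIndependent ℝ ![P₁, P₂, P₃])
    (h12 : sumDist a γ P₁ = sumDist a γ P₂)
    (h23 : sumDist a γ P₂ = sumDist a γ P₃) :
    ∀ p ∈ K, ∀ q ∈ K, sumDist a γ p = sumDist a γ q := by
  set w : E2 := ∑ i, ‖a i‖⁻¹ • a i with hw
  set c : ℝ := ∑ i, γ i / ‖a i‖ with hc
  have key : ∀ p ∈ K, sumDist a γ p = ⟪w, p⟫_ℝ + c := by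
    intro p hp
    rw [sumDist, hw, hc, sum_inner, ← Finset.sum_add_distrib]
    refine Finset.sum_congr rfl fun i _ => ?_
    rw [infDist_line2 _ _ (ha i), abs_of_nonneg (hside i p hp), real_inner_smul_left]
    field_simp
  have e12 : ⟪w, P₂ - P₁⟫_ℝ = 0 := by
    have := key P₁ hP₁; have := key P₂ hP₂
    rw [inner_sub_right]; linarith [h12, key P₁ hP₁, key P₂ hP₂]
  have e13 : ⟪w, P₃ - P₁⟫_ℝ = 0 := by
    rw [inner_sub_right]; linarith [h12, h23, key P₁ hP₁, key P₃ hP₃]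
  have hw0 : w = 0 := w_eq_zero P₁ P₂ P₃ hind w e12 e13
  intro p hp q hq
  rw [key p hp, key q hq, hw0]
  simp
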